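/- Let (C_N, α_N) and (D_N, β_N) be sequences of ℤ-graded chain complexes of 𝔽₂-vector spaces with increment chain maps, and let (φ_N⁰, κ_N⁰) and (φ_N¹, κ_N¹) be two morphisms of telescope data from (C_N, α_N) to (D_N, β_N) (i.e. for u = 0,1, the φ_N^u : C_N → D_N are chain maps and κ_N^u : C_N → D_{N+1} are degree +1 maps with φ_{N+1}^u α_N + β_N φ_N^u = d κ_N^u + κ_N^u d). Suppose there are degree +1 maps φ_N : C_N → D_N and degree +2 maps κ_N : C_N → D_{N+1} such that φ_N¹ + φ_N⁰ = d φ_N + φ_N d and κ_N¹ + κ_N⁰ + φ_{N+1} α_N + β_N φ_N = d κ_N + κ_N d. Then the map Tel(φ, κ) : Tel(C_N, α_N) → Tel(D_N, β_N) defined by Tel(φ, κ)(a + q·b) = φ_N(a) + κ_N(b) + q·φ_N(b) is a chain homotopy between the induced maps: Tel(φ⁰, κ⁰) + Tel(φ¹, κ¹) = δ ∘ Tel(φ, κ) + Tel(φ, κ) ∘ δ. -/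

import Mathlib

open DirectSum

/-- A ℤ-graded chain complex of vector spaces over `𝔽₂ = ZMod 2`, with a
differential `d` of degree `-1` squaring to zero.  The grading is recorded as
an internal direct sum decomposition of the underlying module, and `d` maps
the degree `i` part into the degree `i - 1` part. -/
structure F2GradedComplex : Type 1 where
  V : Type
  [addCommGroup : AddCommGroup V]
  [module : Module (ZMod 2) V]
  grading : ℤ → Submodule (ZMod 2) V
  internal : DirectSum.IsInternal grading
  d : V →ₗ[ZMod 2] V
  d_degree : ∀ i : ℤ, (grading i).map d ≤ grading (i - 1)
  d_sq : d ∘ₗ d = 0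

attribute [instance] F2GradedComplex.addCommGroup F2GradedComplex.module

/-- A linear map is homogeneous of degree `k`. -/
def HasDegree (C D : F2GradedComplex) (k : ℤ) (f : C.V →ₗ[ZMod 2] D.V) : Prop :=
  ∀ i : ℤ, (C.grading i).map f ≤ D.grading (i + k)

/-- A chain map: a linear map of degree `0` commuting with the differentials. -/
def IsChainMap (C D : F2GradedComplex) (f : C.V →ₗ[ZMod 2] D.V) : Prop :=
  HasDegree C D 0 f ∧ f ∘ₗ C.d = D.d ∘ₗ f

/-- Underlying module of the telescope `Tel(C_N, α_N) = ⊕_N (C_N ⊕ q·C_N)`: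
in the summand of index `N`, the first factor is the copy of `C_N` and the
second factor is the copy `q·C_N` (`q` a formal variable of degree one, so an
element of degree `i` of the telescope has first component of degree `i` and
second component of degree `i - 1`). -/
abbrev TelV (C : ℕ → F2GradedComplex) : Type :=
  ⨁ N : ℕ, ((C N).V × (C N).V)

/-- The degree `i` part of the telescope: sums of `a + q·b` with `a` of degree
`i` and `b` of degree `i - 1`. -/
noncomputable def telGrading (C : ℕ → F2GradedComplex) (i : ℤ) :
    Submodule (ZMod 2) (TelV C) :=
  ⨆ N : ℕ, Submodule.map (DirectSum.lof (ZMod 2) ℕ (fun N => (C N).V × (C N).V) N)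
    (((C N).grading i).prod ((C N).grading (i - 1)))

/-- The telescope differential, given on `a + q·b` (with `a, b ∈ C_N`) by
`δ (a + q·b) = d a + q·(d b) + α_N b + b`: the summand of index `N` receives
`(d a + b) + q·(d b)` and the summand of index `N + 1` receives `α_N b`. -/
noncomputable def telDelta (C : ℕ → F2GradedComplex)
    (α : ∀ N : ℕ, (C N).V →ₗ[ZMod 2] (C (N + 1)).V) :
    TelV C →ₗ[ZMod 2] TelV C :=
  DirectSum.toModule (ZMod 2) ℕ (TelV C) fun N =>
    (DirectSum.lof (ZMod 2) ℕ (fun N => (C N).V × (C N).V) N ∘ₗ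
        LinearMap.prod
          ((C N).d ∘ₗ LinearMap.fst (ZMod 2) (C N).V (C N).V
            + LinearMap.snd (ZMod 2) (C N).V (C N).V)
          ((C N).d ∘ₗ LinearMap.snd (ZMod 2) (C N).V (C N).V))
      + (DirectSum.lof (ZMod 2) ℕ (fun N => (C N).V × (C N).V) (N + 1) ∘ₗ
          LinearMap.prod (α N ∘ₗ LinearMap.snd (ZMod 2) (C N).V (C N).V) 0)


/-- The map of telescopes `Tel(φ_N, κ_N)` associated with maps
`φ_N : C_N → D_N` and `κ_N : C_N → D_{N+1}`, given on `a + q·b`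
(with `a, b ∈ C_N`) by `Tel(φ_N, κ_N)(a + q·b) = φ_N(a) + κ_N(b) + q·φ_N(b)`. -/
noncomputable def telMap (C D : ℕ → F2GradedComplex)
    (φ : ∀ N : ℕ, (C N).V →ₗ[ZMod 2] (D N).V)
    (κ : ∀ N : ℕ, (C N).V →ₗ[ZMod 2] (D (N + 1)).V) :
    TelV C →ₗ[ZMod 2] TelV D :=
  DirectSum.toModule (ZMod 2) ℕ (TelV D) fun N =>
    (DirectSum.lof (ZMod 2) ℕ (fun N => (D N).V × (D N).V) N ∘ₗ
        LinearMap.prod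
          (φ N ∘ₗ LinearMap.fst (ZMod 2) (C N).V (C N).V)
          (φ N ∘ₗ LinearMap.snd (ZMod 2) (C N).V (C N).V))
      + (DirectSum.lof (ZMod 2) ℕ (fun N => (D N).V × (D N).V) (N + 1) ∘ₗ
          LinearMap.prod (κ N ∘ₗ LinearMap.snd (ZMod 2) (C N).V (C N).V) 0)

/-- If `(φ_N⁰, κ_N⁰)` and `(φ_N¹, κ_N¹)` are morphisms of
telescope data from `(C_N, α_N)` to `(D_N, β_N)`, and there are degree `+1`
maps `Φ_N : C_N → D_N` and degree `+2` maps `K_N : C_N → D_{N+1}` with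
`φ¹ + φ⁰ = d Φ + Φ d` and `κ¹ + κ⁰ + Φ α + β Φ = d K + K d`, then
`Tel(Φ, K)` is a chain homotopy between `Tel(φ⁰, κ⁰)` and `Tel(φ¹, κ¹)`:
`Tel(φ⁰, κ⁰) + Tel(φ¹, κ¹) = δ ∘ Tel(Φ, K) + Tel(Φ, K) ∘ δ`. -/
theorem telMap_homotopy (C D : ℕ → F2GradedComplex)
    (α : ∀ N : ℕ, (C N).V →ₗ[ZMod 2] (C (N + 1)).V)
    (hα : ∀ N : ℕ, IsChainMap (C N) (C (N + 1)) (α N))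
    (β : ∀ N : ℕ, (D N).V →ₗ[ZMod 2] (D (N + 1)).V)
    (hβ : ∀ N : ℕ, IsChainMap (D N) (D (N + 1)) (β N))
    (φ₀ : ∀ N : ℕ, (C N).V →ₗ[ZMod 2] (D N).V)
    (hφ₀ : ∀ N : ℕ, IsChainMap (C N) (D N) (φ₀ N))
    (κ₀ : ∀ N : ℕ, (C N).V →ₗ[ZMod 2] (D (N + 1)).V)
    (hκ₀ : ∀ N : ℕ, HasDegree (C N) (D (N + 1)) 1 (κ₀ N))
    (hφκ₀ : ∀ N : ℕ,
      φ₀ (N + 1) ∘ₗ α N + β N ∘ₗ φ₀ N = (D (N + 1)).d ∘ₗ κ₀ N + κ₀ N ∘ₗ (C N).d)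
    (φ₁ : ∀ N : ℕ, (C N).V →ₗ[ZMod 2] (D N).V)
    (hφ₁ : ∀ N : ℕ, IsChainMap (C N) (D N) (φ₁ N))
    (κ₁ : ∀ N : ℕ, (C N).V →ₗ[ZMod 2] (D (N + 1)).V)
    (hκ₁ : ∀ N : ℕ, HasDegree (C N) (D (N + 1)) 1 (κ₁ N))
    (hφκ₁ : ∀ N : ℕ,
      φ₁ (N + 1) ∘ₗ α N + β N ∘ₗ φ₁ N = (D (N + 1)).d ∘ₗ κ₁ N + κ₁ N ∘ₗ (C N).d)
    (Φ : ∀ N : ℕ, (C N).V →ₗ[ZMod 2] (D N).V)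
    (hΦ : ∀ N : ℕ, HasDegree (C N) (D N) 1 (Φ N))
    (K : ∀ N : ℕ, (C N).V →ₗ[ZMod 2] (D (N + 1)).V)
    (hK : ∀ N : ℕ, HasDegree (C N) (D (N + 1)) 2 (K N))
    (hΦhtpy : ∀ N : ℕ, φ₁ N + φ₀ N = (D N).d ∘ₗ Φ N + Φ N ∘ₗ (C N).d)
    (hKhtpy : ∀ N : ℕ,
      κ₁ N + κ₀ N + Φ (N + 1) ∘ₗ α N + β N ∘ₗ Φ N
        = (D (N + 1)).d ∘ₗ K N + K N ∘ₗ (C N).d) :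
    telMap C D φ₀ κ₀ + telMap C D φ₁ κ₁
      = telDelta D β ∘ₗ telMap C D Φ K + telMap C D Φ K ∘ₗ telDelta C α := by
  have h2 : ∀ {V : Type} [AddCommGroup V] [Module (ZMod 2) V] (x : V), x + x = 0 := by
    intro V _ _ x
    rw [← two_smul (ZMod 2) x, show (2 : ZMod 2) = 0 by decide, zero_smul]
  apply DirectSum.linearMap_ext
  intro N
  ext x : 2
  · -- the `a` component
    have e1 : φ₁ N x + φ₀ N x = (D N).d (Φ N x) + Φ N ((C N).d x) := by
      simpa using LinearMap.congr_fun (hΦhtpy N) x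
    simp only [LinearMap.add_apply, LinearMap.comp_apply, telMap, telDelta,
      DirectSum.toModule_lof, LinearMap.prod_apply, Function.prod, LinearMap.fst_apply,
      LinearMap.snd_apply, LinearMap.zero_apply, LinearMap.inl_apply,
      Prod.mk_zero_zero, map_add, map_zero, add_zero, zero_add]
    set L := DirectSum.lof (ZMod 2) ℕ (fun N => (D N).V × (D N).V) N with hL
    rw [← map_add, ← map_add, Prod.mk_add_mk, Prod.mk_add_mk, add_zero, ← e1]
    congr 1
    abel
  · -- the `q·b` component
    have e1 : φ₁ N x + φ₀ N x = (D N).d (Φ N x) + Φ N ((C N).d x) := by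
      simpa using LinearMap.congr_fun (hΦhtpy N) x
    have e2 : κ₁ N x + κ₀ N x + Φ (N + 1) (α N x) + β N (Φ N x)
        = (D (N + 1)).d (K N x) + K N ((C N).d x) := by
      simpa using LinearMap.congr_fun (hKhtpy N) x
    have e3 : β N (Φ N x) + (D (N + 1)).d (K N x) + K N ((C N).d x)
        + Φ (N + 1) (α N x) = κ₀ N x + κ₁ N x := by
      rw [show β N (Φ N x) + (D (N + 1)).d (K N x) + K N ((C N).d x)
            + Φ (N + 1) (α N x)
          = ((D (N + 1)).d (K N x) + K N ((C N).d x))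
            + (Φ (N + 1) (α N x) + β N (Φ N x)) by abel, ← e2]
      abel_nf
      simp only [two_nsmul, two_zsmul, h2, add_zero, zero_add]
    simp only [LinearMap.add_apply, LinearMap.comp_apply, telMap, telDelta,
      DirectSum.toModule_lof, LinearMap.prod_apply, Function.prod, LinearMap.fst_apply,
      LinearMap.snd_apply, LinearMap.zero_apply, LinearMap.inr_apply,
      Prod.mk_zero_zero, map_add, map_zero, add_zero, zero_add]
    set L := DirectSum.lof (ZMod 2) ℕ (fun N => (D N).V × (D N).V) N with hL
    set M := DirectSum.lof (ZMod 2) ℕ (fun N => (D N).V × (D N).V) (N + 1) with hM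
    have lhs : L (0, φ₀ N x) + M (κ₀ N x, 0) + (L (0, φ₁ N x) + M (κ₁ N x, 0))
        = L (0, φ₀ N x + φ₁ N x) + M (κ₀ N x + κ₁ N x, 0) := by
      rw [show L (0, φ₀ N x) + M (κ₀ N x, 0) + (L (0, φ₁ N x) + M (κ₁ N x, 0))
          = (L (0, φ₀ N x) + L (0, φ₁ N x)) + (M (κ₀ N x, 0) + M (κ₁ N x, 0)) by abel,
        ← map_add L, ← map_add M, Prod.mk_add_mk, Prod.mk_add_mk, add_zero, zero_add]
    rw [lhs, show L (Φ N x, (D N).d (Φ N x)) + M (β N (Φ N x), 0)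
          + M ((D (N + 1)).d (K N x), 0)
          + (L (Φ N x, Φ N ((C N).d x)) + M (K N ((C N).d x), 0)
            + M (Φ (N + 1) (α N x), 0))
        = (L (Φ N x, (D N).d (Φ N x)) + L (Φ N x, Φ N ((C N).d x)))
          + (((M (β N (Φ N x), 0) + M ((D (N + 1)).d (K N x), 0))
            + M (K N ((C N).d x), 0)) + M (Φ (N + 1) (α N x), 0)) by abel,
      ← map_add L, ← map_add M, ← map_add M, ← map_add M,
      Prod.mk_add_mk, Prod.mk_add_mk, Prod.mk_add_mk, Prod.mk_add_mk,
      add_zero, add_zero, add_zero]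
    congr 1
    · congr 1
      rw [Prod.mk.injEq]
      exact ⟨(h2 _).symm, by rw [add_comm (φ₀ N x)]; exact e1⟩
    · congr 1
      rw [Prod.mk.injEq]
      exact ⟨e3.symm, rfl⟩
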